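/- Let w ≥ 1 and h ≥ 1 be integers, and let d_1 ≥ d_2 ≥ ... ≥ d_{h+1} ≥ 0 be integers with d_i ≤ w for all i and Σ_{i=1}^{h+1} d_i = wh. Then there exists exactly one semistandard Young tableau of rectangular shape (w^h) (h rows of length w) with content (d_1, ..., d_{h+1}); moreover, in this tableau the only values appearing in row i are i and i+1. -/

import Mathlib

/-- `IsSSYT R C r n c T` : the filling `T` (entry `T a b` in row `a`, column `b`,
both 1-indexed) is a semistandard Young tableau of the shape whose `a`-th row
(for `1 ≤ a ≤ R`) consists of the boxes `(a, b)` with `1 ≤ b ≤ r a` (where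
`r a ≤ C`), with entries in `{1, ..., n}`, rows weakly increasing, columns
strictly increasing, and using exactly `c i` entries equal to `i` for each
`1 ≤ i ≤ n`. -/
def IsSSYT (R C : ℕ) (r : ℕ → ℕ) (n : ℕ) (c : ℕ → ℕ) (T : ℕ → ℕ → ℕ) : Prop :=
  (∀ a ∈ Finset.Icc 1 R, ∀ b ∈ Finset.Icc 1 (r a), 1 ≤ T a b ∧ T a b ≤ n) ∧
  (∀ a ∈ Finset.Icc 1 R, ∀ b b' : ℕ, 1 ≤ b → b ≤ b' → b' ≤ r a → T a b ≤ T a b') ∧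
  (∀ a : ℕ, 1 ≤ a → a + 1 ≤ R → ∀ b : ℕ, 1 ≤ b → b ≤ r a → b ≤ r (a + 1) →
    T a b < T (a + 1) b) ∧
  (∀ i : ℕ, 1 ≤ i → i ≤ n →
    ((Finset.Icc 1 R ×ˢ Finset.Icc 1 C).filter
      (fun q => q.2 ≤ r q.1 ∧ T q.1 q.2 = i)).card = c i)

/-- Row lengths of the shape `ϱ = (ℓ^{2k}, p, p)`: rows `1, ..., 2k` have length `ℓ`
and rows `2k+1`, `2k+2` have length `p`. -/
def rhoRow (l k p : ℕ) (a : ℕ) : ℕ := if a ≤ 2 * k then l else p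

/-- A semistandard Young tableau of shape `ϱ = (ℓ^{2k}, p, p)` with content
`(c 1, ..., c n)`. -/
def IsRhoSSYT (l k p n : ℕ) (c : ℕ → ℕ) (T : ℕ → ℕ → ℕ) : Prop :=
  IsSSYT (2 * k + 2) l (rhoRow l k p) n c T

/-- A tableau of shape `ϱ = (ℓ^{2k}, p, p)` is proper if `T (q+2) 1 ≥ T q ℓ`
for all `1 ≤ q ≤ 2k`. -/
def IsProper (l k : ℕ) (T : ℕ → ℕ → ℕ) : Prop :=
  ∀ q : ℕ, 1 ≤ q → q ≤ 2 * k → T q l ≤ T (q + 2) 1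

/-- Two fillings agree on every box of the shape with row lengths `r` and `R` rows. -/
def EqOnShape (R : ℕ) (r : ℕ → ℕ) (T T' : ℕ → ℕ → ℕ) : Prop :=
  ∀ a ∈ Finset.Icc 1 R, ∀ b ∈ Finset.Icc 1 (r a), T a b = T' a b

/-- The content `(c 1, ..., c n)` is `ℓ`-maximal if at least `n - 3` of the
amounts `c i` equal `ℓ`. -/
def IsMaximal (l n : ℕ) (c : ℕ → ℕ) : Prop :=
  n - 3 ≤ ((Finset.Icc 1 n).filter (fun i => c i = l)).card

/-- A filling is normalized if it vanishes outside the boxes of the shape. -/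
def Normalized (R : ℕ) (r : ℕ → ℕ) (T : ℕ → ℕ → ℕ) : Prop :=
  ∀ a b : ℕ, ¬ (1 ≤ a ∧ a ≤ R ∧ 1 ≤ b ∧ b ≤ r a) → T a b = 0
/-- For a rectangle `(w^h)` and weakly decreasing content `(d 1, ..., d (h+1))`
with all `d i ≤ w` and total `w * h`, there is exactly one semistandard Young
tableau, and in it the only values in row `i` are `i` and `i + 1`. -/


lemma downset_eq {w : ℕ} (s : Finset ℕ) (hs : s ⊆ Finset.Icc 1 w)
    (hd : ∀ b b' : ℕ, 1 ≤ b → b ≤ b' → b' ∈ s → b ∈ s) :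
    s = Finset.Icc 1 s.card := by
  rcases s.eq_empty_or_nonempty with rfl | hne
  · simp
  · have hmax := s.max'_mem hne
    have hkey : s = Finset.Icc 1 (s.max' hne) := by
      ext x
      simp only [Finset.mem_Icc]
      constructor
      · intro hx
        exact ⟨(Finset.mem_Icc.mp (hs hx)).1, s.le_max' x hx⟩
      · intro hx
        exact hd x _ hx.1 hx.2 hmax
    have hcard : s.card = s.max' hne := by
      have h2 := congrArg Finset.card hkey
      rw [Nat.card_Icc] at h2
      omega
    rw [hcard]; exact hkey

lemma count_formula (w h i : ℕ) (hi : 1 ≤ i) (U : ℕ → ℕ → ℕ) (f : ℕ → ℕ)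
    (hf : ∀ a : ℕ, 1 ≤ a → a ≤ h → f a ≤ w)
    (hU : ∀ a : ℕ, 1 ≤ a → a ≤ h → ∀ b : ℕ, 1 ≤ b → b ≤ w →
      (U a b = a ∧ b ≤ f a) ∨ (U a b = a + 1 ∧ f a < b)) :
    ((Finset.Icc 1 h ×ˢ Finset.Icc 1 w).filter
      (fun q => q.2 ≤ w ∧ U q.1 q.2 = i)).card
    = (if i ≤ h then f i else 0)
      + (if 2 ≤ i ∧ i ≤ h + 1 then w - f (i - 1) else 0) := by
  classical
  rw [Finset.card_filter, Finset.sum_product]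
  have hrow : ∀ a ∈ Finset.Icc 1 h,
      (∑ b ∈ Finset.Icc 1 w, if b ≤ w ∧ U a b = i then (1:ℕ) else 0)
      = (if a = i then f i else 0) + (if a = i - 1 then w - f (i - 1) else 0) := by
    intro a ha
    rw [Finset.mem_Icc] at ha
    have h1 : (∑ b ∈ Finset.Icc 1 w, if b ≤ w ∧ U a b = i then (1:ℕ) else 0)
        = ((Finset.Icc 1 w).filter (fun b => U a b = i)).card := by
      rw [Finset.card_filter]
      refine Finset.sum_congr rfl fun b hb => ?_
      rw [Finset.mem_Icc] at hb
      simp [hb.2]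
    rw [h1]
    by_cases hai : a = i
    · subst hai
      have hfe : (Finset.Icc 1 w).filter (fun b => U a b = a) = Finset.Icc 1 (f a) := by
        ext b
        simp only [Finset.mem_filter, Finset.mem_Icc]
        constructor
        · rintro ⟨⟨hb1, hb2⟩, hb3⟩
          refine ⟨hb1, ?_⟩
          rcases hU a ha.1 ha.2 b hb1 hb2 with ⟨_, hx⟩ | ⟨hx, _⟩
          · exact hx
          · omega
        · rintro ⟨hb1, hb2⟩
          have hbw : b ≤ w := le_trans hb2 (hf a ha.1 ha.2)
          refine ⟨⟨hb1, hbw⟩, ?_⟩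
          rcases hU a ha.1 ha.2 b hb1 hbw with ⟨hx, _⟩ | ⟨_, hx⟩
          · exact hx
          · omega
      have hne : ¬ (a = a - 1) := by omega
      rw [hfe]
      simp [Nat.card_Icc, hne]
    · by_cases hai2 : a = i - 1
      · have hi2 : i = a + 1 := by omega
        subst hi2
        have hfe : (Finset.Icc 1 w).filter (fun b => U a b = a + 1)
            = Finset.Icc (f a + 1) w := by
          ext b
          simp only [Finset.mem_filter, Finset.mem_Icc]
          constructor
          · rintro ⟨⟨hb1, hb2⟩, hb3⟩
            rcases hU a ha.1 ha.2 b hb1 hb2 with ⟨hx, _⟩ | ⟨_, hx⟩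
            · omega
            · exact ⟨by omega, hb2⟩
          · rintro ⟨hb1, hb2⟩
            have hb1' : 1 ≤ b := by omega
            rcases hU a ha.1 ha.2 b hb1' hb2 with ⟨_, hx⟩ | ⟨hx, _⟩
            · omega
            · exact ⟨⟨hb1', hb2⟩, hx⟩
        have hne : ¬ (a = a + 1) := by omega
        have he2 : a + 1 - 1 = a := by omega
        rw [hfe]
        simp [Nat.card_Icc, hne, he2]
      · have hfe : (Finset.Icc 1 w).filter (fun b => U a b = i) = ∅ := by
          ext b
          simp only [Finset.mem_filter, Finset.mem_Icc, Finset.notMem_empty, iff_false]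
          rintro ⟨⟨hb1, hb2⟩, hb3⟩
          rcases hU a ha.1 ha.2 b hb1 hb2 with ⟨hx, _⟩ | ⟨hx, _⟩ <;> omega
        rw [hfe]
        simp [hai, hai2]
  rw [Finset.sum_congr rfl hrow, Finset.sum_add_distrib]
  rw [Finset.sum_ite_eq' (Finset.Icc 1 h) i (fun _ => f i),
      Finset.sum_ite_eq' (Finset.Icc 1 h) (i - 1) (fun _ => w - f (i - 1))]
  simp only [Finset.mem_Icc]
  split_ifs <;> omega

theorem stmt6 (w h : ℕ) (hw : 1 ≤ w) (hh : 1 ≤ h) (d : ℕ → ℕ)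
    (hbd : ∀ i : ℕ, 1 ≤ i → i ≤ h + 1 → d i ≤ w)
    (hmono : ∀ i j : ℕ, 1 ≤ i → i ≤ j → j ≤ h + 1 → d j ≤ d i)
    (hsum : ∑ i ∈ Finset.Icc 1 (h + 1), d i = w * h) :
    ∃ T : ℕ → ℕ → ℕ,
      IsSSYT h w (fun _ => w) (h + 1) d T ∧
      (∀ a ∈ Finset.Icc 1 h, ∀ b ∈ Finset.Icc 1 w, T a b = a ∨ T a b = a + 1) ∧
      ∀ T' : ℕ → ℕ → ℕ, IsSSYT h w (fun _ => w) (h + 1) d T' →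
        EqOnShape h (fun _ => w) T' T := by
  classical
  set S : ℕ → ℕ := fun i => ∑ j ∈ Finset.Icc 1 i, d j with hSdef
  have hS_succ : ∀ a : ℕ, S (a + 1) = S a + d (a + 1) := by
    intro a
    simp only [hSdef]
    exact Finset.sum_Icc_succ_top (by omega) d
  have hmul : ∀ a : ℕ, 1 ≤ a → a * w = (a - 1) * w + w := by
    intro a ha
    cases a with
    | zero => omega
    | succ n => simp [Nat.succ_mul]
  have hS_le : ∀ i : ℕ, i ≤ h + 1 → S i ≤ i * w := by
    intro i hi
    have := Finset.sum_le_card_nsmul (Finset.Icc 1 i) d w (fun j hj => by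
      rw [Finset.mem_Icc] at hj
      exact hbd j hj.1 (by omega))
    simpa [Nat.card_Icc, smul_eq_mul] using this
  have hSfull : S (h + 1) = w * h := hsum
  have hS_ge : ∀ i : ℕ, 1 ≤ i → i ≤ h + 1 → (i - 1) * w ≤ S i := by
    intro i hi1 hi2
    have hsplit : S i + ∑ j ∈ Finset.Ioc i (h + 1), d j = w * h := by
      rw [← hsum]
      simp only [hSdef]
      rw [show Finset.Icc 1 i = Finset.Ioc 0 i from by rw [← Finset.Icc_add_one_left_eq_Ioc]; simp,
          show Finset.Icc 1 (h + 1) = Finset.Ioc 0 (h + 1) from by rw [← Finset.Icc_add_one_left_eq_Ioc]; simp]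
      exact Finset.sum_Ioc_consecutive d (Nat.zero_le i) hi2
    have htail : ∑ j ∈ Finset.Ioc i (h + 1), d j ≤ (h + 1 - i) * w := by
      have := Finset.sum_le_card_nsmul (Finset.Ioc i (h + 1)) d w (fun j hj => by
        rw [Finset.mem_Ioc] at hj
        exact hbd j (by omega) hj.2)
      simpa [Nat.card_Ioc, smul_eq_mul] using this
    have hkey : (i - 1) * w + (h + 1 - i) * w = w * h := by
      rw [← add_mul, mul_comm]
      congr 1
      omega
    omega
  set e : ℕ → ℕ := fun a => S a - (a - 1) * w with hedef
  have he : ∀ a : ℕ, e a = S a - (a - 1) * w := fun _ => rfl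
  have hew : ∀ a : ℕ, 1 ≤ a → a ≤ h + 1 → e a ≤ w := by
    intro a ha1 ha2
    have h1 := hS_le a ha2
    have h2 := hmul a ha1
    have h3 := he a
    omega
  have hemono : ∀ a : ℕ, 1 ≤ a → a + 1 ≤ h + 1 → e (a + 1) ≤ e a := by
    intro a ha1 ha2
    have h1 := hS_ge a ha1 (by omega)
    have h2 := hS_succ a
    have h3 := hbd (a + 1) (by omega) (by omega)
    have h4 := hmul a ha1
    have h5 := he a
    have h6 := he (a + 1)
    rw [Nat.add_sub_cancel] at h6
    omega
  have ceq : ∀ i : ℕ, 1 ≤ i → i ≤ h + 1 →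
      d i = (if i ≤ h then e i else 0)
        + (if 2 ≤ i ∧ i ≤ h + 1 then w - e (i - 1) else 0) := by
    intro i hi1 hi2
    by_cases h1 : i = 1
    · subst h1
      have hS1 : S 1 = d 1 := by simp [hSdef]
      have he1 := he 1
      have : ¬ (2 ≤ 1 ∧ 1 ≤ h + 1) := by omega
      rw [if_pos hh, if_neg this]
      omega
    · by_cases h2 : i = h + 1
      · subst h2
        have ha := hS_succ h
        have hb := hS_ge h hh (by omega)
        have hc := hmul h hh
        have hdq := he h
        have : ¬ (h + 1 ≤ h) := by omega
        rw [if_neg this, if_pos (by omega)]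
        rw [Nat.add_sub_cancel]
        have hcm : w * h = h * w := Nat.mul_comm w h
        omega
      · -- 2 ≤ i ≤ h
        have hi2' : 2 ≤ i := by omega
        have hih : i ≤ h := by omega
        obtain ⟨j, rfl⟩ : ∃ j, i = j + 2 := ⟨i - 2, by omega⟩
        have ha : S (j + 2) = S (j + 1) + d (j + 2) := hS_succ (j + 1)
        have hb := hS_ge (j + 1) (by omega) (by omega)
        have hb2 := hS_le (j + 1) (by omega)
        have hb3 := hS_ge (j + 2) (by omega) (by omega)
        have hc := hmul (j + 1) (by omega)
        have hd1 := he (j + 1)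
        have hd2 := he (j + 2)
        rw [if_pos hih, if_pos (by omega)]
        simp only [show j + 2 - 1 = j + 1 from rfl, show j + 1 - 1 = j from rfl]
          at hd1 hd2 hb hc hb3 ⊢
        omega
  refine ⟨fun a b => if b ≤ e a then a else a + 1, ⟨?_, ?_, ?_, ?_⟩, ?_, ?_⟩
  · -- bounds
    intro a ha b hb
    rw [Finset.mem_Icc] at ha hb
    dsimp only
    split_ifs <;> omega
  · -- rows
    intro a ha b b' hb hbb' hbw
    dsimp only
    split_ifs <;> omega
  · -- columns
    intro a ha1 ha2 b hb1 hb2 hb3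
    have := hemono a ha1 (by omega)
    dsimp only
    split_ifs <;> omega
  · -- content
    intro i hi1 hi2
    have hcf := count_formula w h i hi1 (fun a b => if b ≤ e a then a else a + 1) e
      (fun a ha1 ha2 => hew a ha1 (by omega))
      (fun a ha1 ha2 b hb1 hb2 => by
        by_cases hbe : b ≤ e a
        · left; exact ⟨if_pos hbe, hbe⟩
        · right; exact ⟨if_neg hbe, by omega⟩)
    simp only at hcf ⊢
    rw [hcf]
    exact (ceq i hi1 hi2).symm
  · -- values in row a
    intro a ha b hb
    dsimp only
    split_ifs <;> simp
  · -- uniqueness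
    intro T' hT'
    obtain ⟨hb', hr', hc', hcnt'⟩ := hT'
    have hlow : ∀ a : ℕ, 1 ≤ a → a ≤ h → ∀ b : ℕ, 1 ≤ b → b ≤ w → a ≤ T' a b := by
      intro a
      induction a with
      | zero => omega
      | succ n ih =>
        intro h1 h2 b hb1 hb2
        rcases Nat.eq_zero_or_pos n with rfl | hn
        · exact (hb' 1 (by simp; omega) b (by simp; omega)).1
        · have hx := ih hn (by omega) b hb1 hb2
          have hy := hc' n hn (by omega) b hb1 hb2 hb2
          omega
    have hhigh : ∀ m a : ℕ, 1 ≤ a → a + m = h → ∀ b : ℕ, 1 ≤ b → b ≤ w →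
        T' a b ≤ a + 1 := by
      intro m
      induction m with
      | zero =>
        intro a h1 h2 b hb1 hb2
        have := (hb' a (by simp; omega) b (by simp; omega)).2
        omega
      | succ n ih =>
        intro a h1 h2 b hb1 hb2
        have hx := ih (a + 1) (by omega) (by omega) b hb1 hb2
        have hy := hc' a h1 (by omega) b hb1 hb2 hb2
        omega
    set g : ℕ → ℕ := fun a => ((Finset.Icc 1 w).filter (fun b => T' a b = a)).card
      with hgdef
    have hgw : ∀ a : ℕ, g a ≤ w := by
      intro a
      have := Finset.card_filter_le (Finset.Icc 1 w) (fun b => T' a b = a)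
      simpa [hgdef, Nat.card_Icc] using this
    have hfilter : ∀ a : ℕ, 1 ≤ a → a ≤ h →
        (Finset.Icc 1 w).filter (fun b => T' a b = a) = Finset.Icc 1 (g a) := by
      intro a ha1 ha2
      exact downset_eq _ (Finset.filter_subset _ _) (by
        intro b b' hb hbb' hmem
        rw [Finset.mem_filter, Finset.mem_Icc] at hmem
        rw [Finset.mem_filter, Finset.mem_Icc]
        have h1 : T' a b ≤ T' a b' := hr' a (by simp; omega) b b' hb hbb' hmem.1.2
        have h2 := hlow a ha1 ha2 b hb (by omega)
        exact ⟨⟨hb, by omega⟩, by omega⟩)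
    have hU' : ∀ a : ℕ, 1 ≤ a → a ≤ h → ∀ b : ℕ, 1 ≤ b → b ≤ w →
        (T' a b = a ∧ b ≤ g a) ∨ (T' a b = a + 1 ∧ g a < b) := by
      intro a ha1 ha2 b hb1 hb2
      have h1 := hlow a ha1 ha2 b hb1 hb2
      have h2 := hhigh (h - a) a ha1 (by omega) b hb1 hb2
      by_cases hv : T' a b = a
      · left
        refine ⟨hv, ?_⟩
        have : b ∈ (Finset.Icc 1 w).filter (fun b => T' a b = a) := by
          rw [Finset.mem_filter, Finset.mem_Icc]; exact ⟨⟨hb1, hb2⟩, hv⟩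
        rw [hfilter a ha1 ha2, Finset.mem_Icc] at this
        omega
      · right
        refine ⟨by omega, ?_⟩
        by_contra hcon
        have : b ∈ Finset.Icc 1 (g a) := by rw [Finset.mem_Icc]; omega
        rw [← hfilter a ha1 ha2, Finset.mem_filter] at this
        exact hv this.2
    have ceq_g : ∀ i : ℕ, 1 ≤ i → i ≤ h + 1 →
        d i = (if i ≤ h then g i else 0)
          + (if 2 ≤ i ∧ i ≤ h + 1 then w - g (i - 1) else 0) := by
      intro i hi1 hi2
      have hcf := count_formula w h i hi1 T' g (fun a ha1 _ => hgw a) hU'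
      have hcc := hcnt' i hi1 hi2
      simp only at hcc
      rw [hcc] at hcf
      exact hcf
    have heg : ∀ i : ℕ, 1 ≤ i → i ≤ h → g i = e i := by
      intro i
      induction i with
      | zero => omega
      | succ n ih =>
        intro h1 h2
        rcases Nat.eq_zero_or_pos n with rfl | hn
        · have c1 := ceq 1 (by omega) (by omega)
          have c2 := ceq_g 1 (by omega) (by omega)
          rw [if_pos hh, if_neg (by omega : ¬ (2 ≤ 1 ∧ 1 ≤ h + 1))] at c1 c2
          show g 1 = e 1
          omega
        · have hih := ih hn (by omega)
          have c1 := ceq (n + 1) (by omega) (by omega)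
          have c2 := ceq_g (n + 1) (by omega) (by omega)
          rw [if_pos h2, if_pos (by omega : 2 ≤ n + 1 ∧ n + 1 ≤ h + 1),
              Nat.add_sub_cancel] at c1 c2
          have := hgw n
          omega
    intro a ha b hb
    rw [Finset.mem_Icc] at ha
    simp only [Finset.mem_Icc] at hb
    have hge := heg a ha.1 ha.2
    rcases hU' a ha.1 ha.2 b hb.1 hb.2 with ⟨h1, h2⟩ | ⟨h1, h2⟩
    · dsimp only
      rw [if_pos (by omega)]
      exact h1
    · dsimp only
      rw [if_neg (by omega)]
      exact h1
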